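/- Let S be a finite connected pruned graph. Then μ1(S) > 1 if and only if χ(S) < 0. -/

import Mathlib

open scoped Classical

structure Multigraph : Type 1 where
  V : Type
  E : Type
  fintypeV : Fintype V
  fintypeE : Fintype E
  head : E → V
  tail : E → V
  inv : E → E
  inv_inv : ∀ e, inv (inv e) = e
  tail_inv : ∀ e, tail (inv e) = head e

attribute [instance] Multigraph.fintypeV Multigraph.fintypeE

namespace Multigraph

noncomputable instance (G : Multigraph) : DecidableEq G.V := Classical.decEq _
noncomputable instance (G : Multigraph) : DecidableEq G.E := Classical.decEq _

/-- The relation identifying a directed edge with its reversal; undirected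
edges are the orbits of the involution, i.e. the classes of (the equivalence
closure of) this relation. -/
def edgeRel (G : Multigraph) (e f : G.E) : Prop := f = e ∨ f = G.inv e

/-- The number of undirected edges, `#E_G`. -/
noncomputable def edgeCard (G : Multigraph) : ℕ := Nat.card (Quot G.edgeRel)

/-- The order `ord(G) = #E_G - #V_G`. -/
noncomputable def ord (G : Multigraph) : ℤ :=
  (G.edgeCard : ℤ) - (Nat.card G.V : ℤ)

/-- The Euler characteristic `χ(G) = #V_G - #Edir_G / 2`. -/
noncomputable def eulerChar (G : Multigraph) : ℚ :=
  (Nat.card G.V : ℚ) - (Nat.card G.E : ℚ) / 2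

/-- The Hashimoto (non-backtracking) matrix. -/
noncomputable def hashimoto (G : Multigraph) : Matrix G.E G.E ℂ :=
  fun e f => if G.head e = G.tail f ∧ G.inv e ≠ f then 1 else 0

/-- `μ₁(G)`: the spectral radius of the Hashimoto matrix. -/
noncomputable def mu1 (G : Multigraph) : ℝ :=
  sSup {x : ℝ | ∃ z ∈ spectrum ℂ G.hashimoto, x = ‖z‖}

def Adj (G : Multigraph) (v w : G.V) : Prop :=
  ∃ e : G.E, G.tail e = v ∧ G.head e = w

/-- `G` is connected: nonempty, and any two vertices are joined by a walk. -/
def Connected (G : Multigraph) : Prop :=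
  Nonempty G.V ∧ ∀ v w : G.V, Relation.ReflTransGen G.Adj v w

/-- The degree of a vertex: the number of directed edges with head `v`. -/
noncomputable def degree (G : Multigraph) (v : G.V) : ℕ :=
  Nat.card {e : G.E // G.head e = v}

/-- A graph is pruned if every vertex has degree at least 2. -/
def Pruned (G : Multigraph) : Prop := ∀ v : G.V, 2 ≤ G.degree v

/-- A subgraph: subsets of vertices and directed edges, closed under the
involution and containing the endpoints of its directed edges. -/
structure Subgraph (G : Multigraph) where
  verts : Set G.V
  edges : Set G.E
  inv_mem : ∀ e ∈ edges, G.inv e ∈ edges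
  head_mem : ∀ e ∈ edges, G.head e ∈ verts
  tail_mem : ∀ e ∈ edges, G.tail e ∈ verts

/-- The multigraph underlying a subgraph. -/
noncomputable def Subgraph.graph {G : Multigraph} (S : G.Subgraph) : Multigraph where
  V := {v : G.V // v ∈ S.verts}
  E := {e : G.E // e ∈ S.edges}
  fintypeV := Fintype.ofFinite _
  fintypeE := Fintype.ofFinite _
  head := fun e => ⟨G.head e.1, S.head_mem e.1 e.2⟩
  tail := fun e => ⟨G.tail e.1, S.tail_mem e.1 e.2⟩
  inv := fun e => ⟨G.inv e.1, S.inv_mem e.1 e.2⟩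
  inv_inv := fun e => Subtype.ext (G.inv_inv e.1)
  tail_inv := fun e => Subtype.ext (G.tail_inv e.1)

/-- A subgraph is proper if it is not the whole graph. -/
def Subgraph.Proper {G : Multigraph} (S : G.Subgraph) : Prop :=
  S.verts ≠ Set.univ ∨ S.edges ≠ Set.univ

/-- Isomorphism of multigraphs. -/
structure Iso (G H : Multigraph) where
  vEquiv : G.V ≃ H.V
  eEquiv : G.E ≃ H.E
  map_head : ∀ e, H.head (eEquiv e) = vEquiv (G.head e)
  map_tail : ∀ e, H.tail (eEquiv e) = vEquiv (G.tail e)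
  map_inv : ∀ e, H.inv (eEquiv e) = eEquiv (G.inv e)

end Multigraph

/-- A `(≥ν,<r)`-tangle: a connected graph `ψ` with `μ₁(ψ) ≥ ν` and `ord(ψ) < r`. -/
def IsTangle (ν : ℝ) (r : ℤ) (ψ : Multigraph) : Prop :=
  ψ.Connected ∧ ν ≤ ψ.mu1 ∧ ψ.ord < r

/-- A minimal `(≥ν,<r)`-tangle: no proper subgraph is a `(≥ν,<r)`-tangle. -/
def IsMinimalTangle (ν : ℝ) (r : ℤ) (ψ : Multigraph) : Prop :=
  IsTangle ν r ψ ∧ ∀ S : ψ.Subgraph, S.Proper → ¬ IsTangle ν r S.graph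

namespace MG

open Matrix Polynomial Finset

variable {n : Type} [Fintype n] [DecidableEq n]

lemma det_algebraMap_sub (M : Matrix n n ℂ) (z : ℂ) :
    ((algebraMap ℂ (Matrix n n ℂ)) z - M).det = M.charpoly.eval z := by
  have h1 : M.charpoly.eval z = ((M.charmatrix).map (Polynomial.evalRingHom z)).det := by
    simpa [Matrix.charpoly] using RingHom.map_det (Polynomial.evalRingHom z) M.charmatrix
  rw [h1]
  congr 1
  ext i j
  by_cases h : i = j <;>
    simp [Matrix.charmatrix_apply, Matrix.algebraMap_matrix_apply, Matrix.sub_apply,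
      Matrix.diagonal_apply, h]

lemma mem_spectrum_iff_isRoot (M : Matrix n n ℂ) (z : ℂ) :
    z ∈ spectrum ℂ M ↔ M.charpoly.IsRoot z := by
  rw [spectrum.mem_iff, Matrix.isUnit_iff_isUnit_det, isUnit_iff_ne_zero, not_not,
    det_algebraMap_sub, Polynomial.IsRoot]


variable (S : Multigraph)

lemma head_inv (e : S.E) : S.head (S.inv e) = S.tail e := by
  have := S.tail_inv (S.inv e); rw [S.inv_inv] at this; exact this.symm

lemma degree_eq (v : S.V) :
    S.degree v = (Finset.univ.filter fun e => S.head e = v).card := by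
  rw [Multigraph.degree, Nat.card_eq_fintype_card, Fintype.card_subtype]

lemma card_tail (v : S.V) :
    (Finset.univ.filter fun e => S.tail e = v).card = S.degree v := by
  rw [degree_eq]
  apply Finset.card_bij' (fun e _ => S.inv e) (fun e _ => S.inv e)
  · intro a ha
    simp only [Finset.mem_filter, Finset.mem_univ, true_and] at ha ⊢
    rw [head_inv, ha]
  · intro a ha
    simp only [Finset.mem_filter, Finset.mem_univ, true_and] at ha ⊢
    rw [S.tail_inv, ha]
  · intro a _; exact S.inv_inv a
  · intro a _; exact S.inv_inv a

lemma sum_degree : ∑ v : S.V, S.degree v = Fintype.card S.E := by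
  simp_rw [degree_eq]
  rw [← Finset.card_univ,
    Finset.card_eq_sum_card_fiberwise (fun e _ => Finset.mem_univ (S.head e))]


lemma hashimoto_det_abs (hp : S.Pruned) :
    ‖S.hashimoto.det‖ = ∏ v : S.V, ((S.degree v : ℝ) - 1) := by
  classical
  set M : Matrix S.E S.V ℂ := fun e v => if S.head e = v then 1 else 0 with hM
  set Nm : Matrix S.E S.V ℂ := fun e v => if S.tail e = v then 1 else 0 with hNm
  set J : Matrix S.E S.E ℂ := fun e f => if f = S.inv e then 1 else 0 with hJ
  have hJJ : J * J = 1 := by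
    ext e f
    rw [Matrix.mul_apply]
    rw [Finset.sum_eq_single (S.inv e)]
    · by_cases h : f = e
      · subst h
        rw [Matrix.one_apply_eq]
        show (if S.inv f = S.inv f then (1:ℂ) else 0) * (if f = S.inv (S.inv f) then 1 else 0) = 1
        rw [if_pos rfl, if_pos (S.inv_inv f).symm, one_mul]
      · rw [Matrix.one_apply_ne (Ne.symm h)]
        have hne : ¬ f = S.inv (S.inv e) := by rw [S.inv_inv]; exact h
        show (if S.inv e = S.inv e then (1:ℂ) else 0) * (if f = S.inv (S.inv e) then 1 else 0) = 0
        rw [if_neg hne, mul_zero]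
    · intro g _ hg
      simp [hJ, hg]
    · simp
  have hB : ∀ e f, (M * Nm.transpose) e f = if S.head e = S.tail f then (1:ℂ) else 0 := by
    intro e f
    rw [Matrix.mul_apply]
    have hterm : ∀ v, M e v * Nm.transpose v f =
        if S.head e = v ∧ S.tail f = v then (1:ℂ) else 0 := by
      intro v
      by_cases h1 : S.head e = v <;> by_cases h2 : S.tail f = v <;>
        simp [hM, hNm, Matrix.transpose, h1, h2]
    simp_rw [hterm]
    rw [Finset.sum_eq_single (S.head e)]
    · by_cases h : S.head e = S.tail f
      · rw [if_pos ⟨rfl, h.symm⟩, if_pos h]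
      · have h' : ¬ (S.head e = S.head e ∧ S.tail f = S.head e) :=
          fun hh => h hh.2.symm
        rw [if_neg h', if_neg h]
    · intro v _ hv
      simp [Ne.symm hv]
    · simp
  have hH : S.hashimoto = M * Nm.transpose - J := by
    ext e f
    rw [Matrix.sub_apply, hB]
    by_cases h2 : f = S.inv e
    · have h1 : S.head e = S.tail f := by rw [h2, S.tail_inv]
      simp [Multigraph.hashimoto, hJ, h1, h2]
    · by_cases h1 : S.head e = S.tail f
      · have h2' : ¬ S.inv e = f := fun hh => h2 hh.symm
        simp [Multigraph.hashimoto, hJ, h1, h2, h2']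
      · simp [Multigraph.hashimoto, hJ, h1, h2]
  have hfact : S.hashimoto = (-J) * (1 + (-(J * M)) * Nm.transpose) := by
    rw [hH, Matrix.mul_add, Matrix.mul_one, Matrix.neg_mul, Matrix.neg_mul, Matrix.mul_neg,
      neg_neg, ← Matrix.mul_assoc, ← Matrix.mul_assoc, hJJ, Matrix.one_mul]
    abel
  have hdet1 : S.hashimoto.det = (-J).det * ((1 + Nm.transpose * (-(J * M))).det) := by
    rw [hfact, Matrix.det_mul, Matrix.det_one_add_mul_comm]
  have hJM : ∀ e w, (J * M) e w = if S.tail e = w then (1:ℂ) else 0 := by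
    intro e w
    rw [Matrix.mul_apply, Finset.sum_eq_single (S.inv e)]
    · simp [hJ, hM, head_inv]
    · intro g _ hg; simp [hJ, hg]
    · simp
  have hdiag : (1 : Matrix S.V S.V ℂ) + Nm.transpose * (-(J * M)) =
      Matrix.diagonal (fun v => 1 - (S.degree v : ℂ)) := by
    ext v w
    rw [Matrix.add_apply, Matrix.mul_apply]
    simp_rw [Matrix.neg_apply, hJM, Matrix.transpose_apply]
    have hterm : ∀ e, Nm e v * -(if S.tail e = w then (1:ℂ) else 0) =
        -(if S.tail e = v ∧ S.tail e = w then (1:ℂ) else 0) := by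
      intro e
      by_cases h1 : S.tail e = v <;> by_cases h2 : S.tail e = w <;> simp [hNm, h1, h2]
    simp_rw [hterm]
    by_cases hvw : v = w
    · subst hvw
      simp only [and_self, Matrix.diagonal_apply_eq, Matrix.one_apply_eq]
      rw [Finset.sum_neg_distrib, Finset.sum_boole, card_tail]
      ring
    · simp only [Matrix.diagonal_apply_ne _ hvw, Matrix.one_apply_ne hvw]
      have : ∀ e : S.E, -(if S.tail e = v ∧ S.tail e = w then (1:ℂ) else 0) = 0 := by
        intro e
        by_cases h1 : S.tail e = v
        · have hw : ¬ S.tail e = w := fun h2 => hvw (h1.symm.trans h2)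
          simp [h1, hvw]
        · simp [h1]
      simp [this]
  have hdJ : ‖(-J).det‖ = 1 := by
    have hsq : (-J).det * (-J).det = 1 := by
      rw [← Matrix.det_mul, neg_mul_neg, hJJ, Matrix.det_one]
    have : ‖(-J).det‖ * ‖(-J).det‖ = 1 := by
      rw [← norm_mul, hsq, norm_one]
    nlinarith [norm_nonneg ((-J).det), this]
  rw [hdet1, hdiag, Matrix.det_diagonal, norm_mul, hdJ, one_mul,
    norm_prod]
  apply Finset.prod_congr rfl
  intro v _
  have h2 : 2 ≤ S.degree v := hp v
  have : (1 : ℂ) - (S.degree v : ℂ) = (((1 : ℝ) - (S.degree v : ℝ) : ℝ) : ℂ) := by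
    push_cast; ring
  rw [this, Complex.norm_real, Real.norm_eq_abs, abs_of_nonpos (by
    have : (2:ℝ) ≤ (S.degree v : ℝ) := by exact_mod_cast h2
    linarith)]
  ring


lemma abs_le_mu1 {z : ℂ} (hz : z ∈ spectrum ℂ S.hashimoto) : ‖z‖ ≤ S.mu1 := by
  classical
  have hset : {x : ℝ | ∃ w ∈ spectrum ℂ S.hashimoto, x = ‖w‖}
      = (fun w : ℂ => ‖w‖) '' spectrum ℂ S.hashimoto := by
    ext x
    simp only [Set.mem_setOf_eq, Set.mem_image]
    constructor
    · rintro ⟨w, hw, rfl⟩; exact ⟨w, hw, rfl⟩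
    · rintro ⟨w, hw, rfl⟩; exact ⟨w, hw, rfl⟩
  have hfin : (spectrum ℂ S.hashimoto).Finite := by
    apply Set.Finite.subset (Polynomial.finite_setOf_isRoot
      (p := S.hashimoto.charpoly) (Matrix.charpoly_monic _).ne_zero)
    intro w hw
    exact (mem_spectrum_iff_isRoot _ _).mp hw
  rw [Multigraph.mu1]
  apply le_csSup
  · rw [hset]; exact (hfin.image _).bddAbove
  · exact ⟨z, hz, rfl⟩

lemma one_lt_mu1 (hp : S.Pruned) (v0 : S.V) (h3 : 3 ≤ S.degree v0) : 1 < S.mu1 := by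
  classical
  by_contra hle
  push_neg at hle
  have h2 : (2:ℝ) ≤ ∏ v : S.V, ((S.degree v : ℝ) - 1) := by
    rw [← Finset.mul_prod_erase Finset.univ _ (Finset.mem_univ v0)]
    have hv0 : (2:ℝ) ≤ (S.degree v0 : ℝ) - 1 := by
      have : (3:ℝ) ≤ (S.degree v0 : ℝ) := by exact_mod_cast h3
      linarith
    have hrest : (1:ℝ) ≤ ∏ v ∈ Finset.univ.erase v0, ((S.degree v : ℝ) - 1) := by
      have := Finset.prod_le_prod (s := Finset.univ.erase v0) (f := fun _ => (1:ℝ))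
        (g := fun v => (S.degree v : ℝ) - 1) (fun _ _ => zero_le_one)
        (fun v _ => by
          show (1:ℝ) ≤ (S.degree v : ℝ) - 1
          have : (2:ℝ) ≤ (S.degree v : ℝ) := by exact_mod_cast hp v
          linarith)
      simpa using this
    calc (2:ℝ) = 2 * 1 := by ring
    _ ≤ ((S.degree v0 : ℝ) - 1) * ∏ v ∈ Finset.univ.erase v0, ((S.degree v : ℝ) - 1) :=
        mul_le_mul hv0 hrest zero_le_one (by linarith)
  have hprod : ‖S.hashimoto.det‖
      = ((S.hashimoto.charpoly.roots).map (fun w : ℂ => ‖w‖)).prod := by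
    rw [Matrix.det_eq_prod_roots_charpoly]
    exact map_multiset_prod (normHom : ℂ →*₀ ℝ) _
  have hall : ∀ x ∈ (S.hashimoto.charpoly.roots).map (fun w : ℂ => ‖w‖), 0 ≤ x ∧ x ≤ 1 := by
    intro x hx
    obtain ⟨z, hz, rfl⟩ := Multiset.mem_map.mp hx
    refine ⟨norm_nonneg z, ?_⟩
    have hzs : z ∈ spectrum ℂ S.hashimoto :=
      (mem_spectrum_iff_isRoot _ _).mpr (Polynomial.isRoot_of_mem_roots hz)
    exact le_trans (abs_le_mu1 S hzs) hle
  have key : ∀ m : Multiset ℝ, (∀ x ∈ m, 0 ≤ x ∧ x ≤ 1) → m.prod ≤ 1 ∧ 0 ≤ m.prod := by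
    intro m
    induction m using Multiset.induction with
    | empty => intro _; simp
    | cons a t ih =>
      intro h
      have ha := h a (Multiset.mem_cons_self a t)
      have ht := ih fun x hx => h x (Multiset.mem_cons_of_mem hx)
      rw [Multiset.prod_cons]
      exact ⟨mul_le_one₀ ha.2 ht.2 ht.1, mul_nonneg ha.1 ht.2⟩
  have := (key _ hall).1
  rw [← hprod, hashimoto_det_abs S hp] at this
  linarith

lemma mu1_le_one (h2 : ∀ v, S.degree v = 2) : S.mu1 ≤ 1 := by
  classical
  have hcard : ∀ v, (Finset.univ.filter fun e => S.tail e = v).card = 2 := by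
    intro v; rw [card_tail, h2]
  have hsucc : ∀ e : S.E, ∃ f,
      ((Finset.univ.filter fun g => S.tail g = S.head e).erase (S.inv e)) = {f} := by
    intro e
    apply Finset.card_eq_one.mp
    have h1 : S.inv e ∈ Finset.univ.filter fun g => S.tail g = S.head e := by
      simp [S.tail_inv]
    rw [Finset.card_erase_of_mem h1, hcard]
  choose s hs using hsucc
  have hsmem : ∀ e, S.tail (s e) = S.head e ∧ s e ≠ S.inv e := by
    intro e
    have : s e ∈ ((Finset.univ.filter fun g => S.tail g = S.head e).erase (S.inv e)) := by
      rw [hs e]; exact Finset.mem_singleton_self _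
    rw [Finset.mem_erase, Finset.mem_filter] at this
    exact ⟨this.2.2, this.1⟩
  have hrow : ∀ e f, S.hashimoto e f = if f = s e then 1 else 0 := by
    intro e f
    by_cases hf : f = s e
    · subst hf
      have h1 : S.head e = S.tail (s e) := (hsmem e).1.symm
      have h2' : S.inv e ≠ s e := fun h => (hsmem e).2 h.symm
      simp [Multigraph.hashimoto, h1, h2']
    · rw [if_neg hf]
      by_cases hc : S.head e = S.tail f ∧ S.inv e ≠ f
      · exfalso
        apply hf
        have : f ∈ ((Finset.univ.filter fun g => S.tail g = S.head e).erase (S.inv e)) := by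
          rw [Finset.mem_erase, Finset.mem_filter]
          exact ⟨fun h => hc.2 h.symm, Finset.mem_univ _, hc.1.symm⟩
        rw [hs e, Finset.mem_singleton] at this
        exact this
      · simp [Multigraph.hashimoto, hc]
  have hinj : Function.Injective s := by
    intro e1 e2 heq
    have hone : ∀ e : S.E,
        ((Finset.univ.filter fun g => S.head g = S.tail (s e)).erase (S.inv (s e))).card = 1 := by
      intro e
      have hmem : S.inv (s e) ∈ Finset.univ.filter fun g => S.head g = S.tail (s e) := by
        simp [head_inv]
      rw [Finset.card_erase_of_mem hmem]
      have : (Finset.univ.filter fun g => S.head g = S.tail (s e)).card = 2 := by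
        rw [← degree_eq, h2]
      rw [this]
    have hmem : ∀ e : S.E,
        e ∈ ((Finset.univ.filter fun g => S.head g = S.tail (s e)).erase (S.inv (s e))) := by
      intro e
      rw [Finset.mem_erase, Finset.mem_filter]
      refine ⟨?_, Finset.mem_univ _, (hsmem e).1.symm⟩
      intro h
      apply (hsmem e).2
      have hh := congrArg S.inv h
      rw [S.inv_inv] at hh
      exact hh.symm
    obtain ⟨a, ha⟩ := Finset.card_eq_one.mp (hone e1)
    have h1 := hmem e1
    have h2' := hmem e2
    rw [← heq] at h2'
    rw [ha, Finset.mem_singleton] at h1 h2'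
    rw [h1, h2']
  apply Real.sSup_le _ zero_le_one
  rintro x ⟨z, hz, rfl⟩
  have hroot := (mem_spectrum_iff_isRoot _ _).mp hz
  have hdet : ((algebraMap ℂ (Matrix S.E S.E ℂ)) z - S.hashimoto).det = 0 := by
    rw [det_algebraMap_sub]; exact hroot
  obtain ⟨v, hv0, hv⟩ := (Matrix.exists_mulVec_eq_zero_iff).mpr hdet
  have heig : ∀ e, v (s e) = z * v e := by
    intro e
    have h1 : ((algebraMap ℂ (Matrix S.E S.E ℂ)) z - S.hashimoto).mulVec v e = 0 := by
      rw [hv]; rfl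
    rw [Matrix.sub_mulVec] at h1
    have h2' : ((algebraMap ℂ (Matrix S.E S.E ℂ)) z).mulVec v = z • v := by
      rw [Algebra.algebraMap_eq_smul_one, Matrix.smul_mulVec, Matrix.one_mulVec]
    rw [h2'] at h1
    have h3 : S.hashimoto.mulVec v e = v (s e) := by
      rw [Matrix.mulVec, dotProduct]
      simp_rw [hrow]
      rw [Finset.sum_eq_single (s e)]
      · simp
      · intro g _ hg; simp [hg]
      · simp
    rw [Pi.sub_apply, Pi.smul_apply, h3, smul_eq_mul] at h1
    exact (sub_eq_zero.mp h1).symm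
  obtain ⟨e0, he0⟩ := Function.ne_iff.mp hv0
  let σ : Equiv.Perm S.E := Equiv.ofBijective s (Finite.injective_iff_bijective.mp hinj)
  have hiter : ∀ n : ℕ, v ((σ ^ n) e0) = z ^ n * v e0 := by
    intro n
    induction n with
    | zero => simp
    | succ n ih =>
      have hstep : (σ ^ (n + 1)) e0 = s ((σ ^ n) e0) := by
        rw [pow_succ']
        rfl
      rw [hstep, heig, ih]
      ring
  have hk := pow_orderOf_eq_one σ
  have hkpos : 0 < orderOf σ := orderOf_pos σ
  have hfix : v e0 = z ^ orderOf σ * v e0 := by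
    have := hiter (orderOf σ)
    rwa [hk, Equiv.Perm.one_apply] at this
  have hzk : z ^ orderOf σ = 1 := by
    have h6 : (z ^ orderOf σ - 1) * v e0 = 0 := by
      rw [sub_mul, one_mul, ← hfix, sub_self]
    rcases mul_eq_zero.mp h6 with h7 | h7
    · exact sub_eq_zero.mp h7
    · exact absurd h7 he0
  have habs : ‖z‖ ^ orderOf σ = 1 := by
    rw [← norm_pow, hzk, norm_one]
  by_contra hgt
  push_neg at hgt
  have := one_lt_pow₀ hgt hkpos.ne'
  rw [habs] at this
  exact lt_irrefl 1 this

end MG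

/-- For a finite connected pruned graph `S`, the spectral radius of
its Hashimoto matrix satisfies `μ₁(S) > 1` iff the Euler characteristic satisfies
`χ(S) < 0`. -/
theorem mu1_gt_one_iff_eulerChar_neg (S : Multigraph)
    (hconn : S.Connected) (hpruned : S.Pruned) :
    1 < S.mu1 ↔ S.eulerChar < 0 := by
  classical
  have hchi : S.eulerChar < 0 ↔ 2 * Fintype.card S.V < Fintype.card S.E := by
    rw [Multigraph.eulerChar, Nat.card_eq_fintype_card, Nat.card_eq_fintype_card, sub_neg,
      lt_div_iff₀ (by norm_num : (0:ℚ) < 2)]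
    rw [show (Fintype.card S.V : ℚ) * 2 = ((2 * Fintype.card S.V : ℕ) : ℚ) by push_cast; ring]
    exact Nat.cast_lt
  have hsum := MG.sum_degree S
  constructor
  · intro h1
    rw [hchi]
    by_contra hle
    push_neg at hle
    have hall : ∀ v : S.V, S.degree v = 2 := by
      have hge : ∑ _v : S.V, (2:ℕ) ≤ ∑ v : S.V, S.degree v :=
        Finset.sum_le_sum fun v _ => hpruned v
      have hle2 : ∑ v : S.V, S.degree v ≤ ∑ _v : S.V, (2:ℕ) := by
        rw [hsum, Finset.sum_const, smul_eq_mul, Finset.card_univ, mul_comm]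
        exact hle
      have heq : ∑ _v : S.V, (2:ℕ) = ∑ v : S.V, S.degree v := le_antisymm hge hle2
      intro v
      exact ((Finset.sum_eq_sum_iff_of_le fun v _ => hpruned v).mp heq v
        (Finset.mem_univ v)).symm
    exact absurd h1 (not_lt.mpr (MG.mu1_le_one S hall))
  · intro hchi0
    rw [hchi] at hchi0
    by_cases hex : ∃ v0 : S.V, 3 ≤ S.degree v0
    · obtain ⟨v0, hv0⟩ := hex
      exact MG.one_lt_mu1 S hpruned v0 hv0
    · exfalso
      push_neg at hex
      have hb : ∑ v : S.V, S.degree v ≤ ∑ _v : S.V, (2:ℕ) :=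
        Finset.sum_le_sum fun v _ => Nat.lt_succ_iff.mp (hex v)
      rw [hsum, Finset.sum_const, smul_eq_mul, Finset.card_univ] at hb
      omega
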